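/- Assume κ = κ^{<κ} is an infinite cardinal. If δ is a limit ordinal and ⟨n_α : α < δ⟩ is a ≤_N-increasing sequence in N, then it has a ≤_N-least upper bound n, determined by: m_n = ⋃_{α<δ} m_{n_α} (so L_n = ⋃_{α<δ} L_{n_α} with the union order, and for s ∈ L_{n_α}, A_{n,s} = ⋃_{β∈[α,δ)} A_{n_β,s}); W_n = ⋃_{α<δ} W_{n_α}; λ_{n,s} = λ_{n_α,s} and B_{n,s} = B_{n_α,s} whenever s ∈ L_{n_α}; and, for s ∈ L_{n_α} \ W_n, I_{n,s} is the closure of ⋃_{β∈[α,δ)} I_{n_β,s} under unions of fewer than κ members. -/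

import Mathlib

universe u

open Cardinal

/-- A combinatorial template on an ambient type `τ`: a linear order on a set `L ⊆ τ`
together with, for each `t ∈ L`, a family `A t` of subsets of `{s ∈ L : s < t}`
containing `∅`.  (The relation `lt` and the family-function `A` are pinned down outside
of `L` to make the notion extensional.) -/
structure CombTemplate (τ : Type u) : Type u where
  /-- the underlying set of the linear order `L_m`. -/
  L : Set τ
  /-- the strict order relation of `L_m`. -/
  lt : τ → τ → Prop
  lt_mem : ∀ {s t}, lt s t → s ∈ L ∧ t ∈ L
  lt_irrefl : ∀ s, ¬lt s s
  lt_trans : ∀ {r s t}, lt r s → lt s t → lt r t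
  lt_total : ∀ {s t}, s ∈ L → t ∈ L → lt s t ∨ s = t ∨ lt t s
  /-- the memory: for `t ∈ L`, a family of subsets of `{s ∈ L : lt s t}`. -/
  A : τ → Set (Set τ)
  A_dom : ∀ t, t ∉ L → A t = ∅
  A_sub : ∀ {t}, t ∈ L → ∀ a ∈ A t, ∀ s ∈ a, lt s t
  A_empty : ∀ t ∈ L, ∅ ∈ A t

/-- The relation `≤_M` on combinatorial templates: `L_{m₁} ⊆ L_{m₂}` as linear orders and
`A_{m₁,t} ⊆ A_{m₂,t}` for every `t ∈ L_{m₁}`. -/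
def MLE {τ : Type u} (m₁ m₂ : CombTemplate τ) : Prop :=
  m₁.L ⊆ m₂.L ∧
  (∀ s t, s ∈ m₁.L → t ∈ m₁.L → (m₁.lt s t ↔ m₂.lt s t)) ∧
  ∀ t ∈ m₁.L, m₁.A t ⊆ m₂.A t

/-- A member of the class `N`: a combinatorial template together with a set `W ⊆ L`,
cardinals `λ_t = λ_t ^ κ`, families `B t` and `κ`-complete ideals `I t` on `B t`
(for `t ∈ L \ W`), subject to the requirements of Definition `N`.  (The data are pinned
down outside their intended domains to make the notion extensional.) -/
structure NTemplate (τ : Type u) (κ : Cardinal.{u}) : Type (u + 1) where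
  ct : CombTemplate τ
  W : Set τ
  W_sub : W ⊆ ct.L
  lam : τ → Cardinal.{u}
  B : τ → Set (Set τ)
  Idl : τ → Set (Set (Set τ))
  lam_pow : ∀ t ∈ ct.L, lam t ^ κ = lam t
  lam_dom : ∀ t ∉ ct.L, lam t = 0
  B_dom : ∀ t ∉ ct.L, B t = ∅
  Idl_dom : ∀ t, t ∉ ct.L \ W → Idl t = ∅
  /-- for `t ∈ W`: `B t = A t` … -/
  B_eq_of_mem_W : ∀ t ∈ W, B t = ct.A t
  /-- … `|A t| ≤ λ t` … -/
  A_card_of_mem_W : ∀ t ∈ W, #(ct.A t) ≤ lam t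
  /-- … and every `a ∈ A t` has cardinality `≤ λ t` and is a subset of `W`. -/
  A_elt_of_mem_W : ∀ t ∈ W, ∀ a ∈ ct.A t, #a ≤ lam t ∧ a ⊆ W
  /-- for `t ∈ L \ W`: `B t ⊆ A t` is a family of subsets of `W` … -/
  B_subA : ∀ t ∈ ct.L \ W, B t ⊆ ct.A t
  B_elt : ∀ t ∈ ct.L \ W, ∀ b ∈ B t, b ⊆ W ∧ #b ≤ lam t
  /-- … with `|B t| ≤ 2 ^ λ t` … -/
  B_card : ∀ t ∈ ct.L \ W, #(B t) ≤ 2 ^ lam t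
  /-- … and `Idl t` is a `κ`-complete ideal on `B t` … -/
  Idl_sub : ∀ t ∈ ct.L \ W, ∀ X ∈ Idl t, X ⊆ B t
  Idl_down : ∀ t ∈ ct.L \ W, ∀ X ∈ Idl t, ∀ Y : Set (Set τ), Y ⊆ X → Y ∈ Idl t
  Idl_iUnion : ∀ t ∈ ct.L \ W, ∀ (ι : Type u) (f : ι → Set (Set τ)), #ι < κ →
    (∀ i, f i ∈ Idl t) → (⋃ i, f i) ∈ Idl t
  /-- … such that `{b ∈ B t : a ∩ b ≠ ∅} ∈ Idl t` for every `a ∈ A t`. -/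
  Idl_spec : ∀ t ∈ ct.L \ W, ∀ a ∈ ct.A t, {b ∈ B t | (a ∩ b).Nonempty} ∈ Idl t

/-- The relation `≤_N` on `N`. -/
def NLE {τ : Type u} {κ : Cardinal.{u}} (n₁ n₂ : NTemplate τ κ) : Prop :=
  MLE n₁.ct n₂.ct ∧ n₁.W = n₂.W ∩ n₁.ct.L ∧
  ∀ s ∈ n₁.ct.L, n₁.lam s = n₂.lam s ∧ n₁.B s = n₂.B s ∧
    n₁.ct.A s ⊆ n₂.ct.A s ∧ n₁.Idl s ⊆ n₂.Idl s

/-- A subset `L ⊆ L_n` is `n`-closed when every member of every `B_{n,s}`, `s ∈ L`, is a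
subset of `L`. -/
def NClosed {τ : Type u} {κ : Cardinal.{u}} (n : NTemplate τ κ) (L : Set τ) : Prop :=
  ∀ s ∈ L, ∀ a ∈ n.B s, a ⊆ L

/-- Assume `κ = κ^{<κ}` is an infinite cardinal.  If `δ` is a limit
ordinal and `⟨n α : α < δ⟩` is a `≤_N`-increasing sequence in `N`, then it has a
`≤_N`-least upper bound `n`, determined by: `m_n = ⋃_{α<δ} m_{n α}`, `W_n = ⋃_{α<δ} W_{n α}`,
`λ` and `B` unchanged on each `L_{n α}`, and `I_{n,s}` (for `s ∈ L_{n α} \ W_n`) the closure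
of `⋃_{β ∈ [α,δ)} I_{n β, s}` under unions of fewer than `κ` members. -/
theorem NLE_increasing_lub {τ : Type u} {κ : Cardinal.{u}} (hκinf : ℵ₀ ≤ κ)
    (hκ : κ ^< κ = κ) (δ : Ordinal.{u}) (hδ : Order.IsSuccLimit δ)
    (n : Set.Iio δ → NTemplate τ κ)
    (hmono : ∀ i j : Set.Iio δ, (i : Ordinal.{u}) ≤ (j : Ordinal.{u}) → NLE (n i) (n j)) :
    ∃ nu : NTemplate τ κ,
      (nu.ct.L = ⋃ i : Set.Iio δ, (n i).ct.L) ∧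
      (∀ s t : τ, nu.ct.lt s t ↔ ∃ i : Set.Iio δ, (n i).ct.lt s t) ∧
      (∀ i : Set.Iio δ, ∀ s ∈ (n i).ct.L,
        nu.ct.A s = {a | ∃ j : Set.Iio δ, (i : Ordinal.{u}) ≤ (j : Ordinal.{u}) ∧
          a ∈ (n j).ct.A s}) ∧
      (nu.W = ⋃ i : Set.Iio δ, (n i).W) ∧
      (∀ i : Set.Iio δ, ∀ s ∈ (n i).ct.L,
        nu.lam s = (n i).lam s ∧ nu.B s = (n i).B s) ∧
      (∀ i : Set.Iio δ, ∀ s ∈ (n i).ct.L, s ∉ nu.W →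
        nu.Idl s = {X | ∃ (ι : Type u) (f : ι → Set (Set τ)), #ι < κ ∧
          (∀ k : ι, ∃ j : Set.Iio δ, (i : Ordinal.{u}) ≤ (j : Ordinal.{u}) ∧
            f k ∈ (n j).Idl s) ∧ X = ⋃ k, f k}) ∧
      (∀ i, NLE (n i) nu) ∧
      ∀ n' : NTemplate τ κ, (∀ i, NLE (n i) n') → NLE nu n' := by
  classical
  haveI hne : Nonempty (Set.Iio δ) := ⟨⟨0, hδ.pos⟩⟩
  have hreg : κ.IsRegular := by
    refine ⟨hκinf, ?_⟩
    by_contra h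
    push_neg at h
    have hlt := (Cardinal.lt_power_cof hκinf).trans_le (Cardinal.le_powerlt κ h)
    rw [hκ] at hlt
    exact lt_irrefl κ hlt
  have h1κ : (1 : Cardinal) < κ := one_lt_aleph0.trans_le hκinf
  have hmx : ∀ i j : Set.Iio δ, ∃ k : Set.Iio δ,
      (i : Ordinal.{u}) ≤ (k : Ordinal.{u}) ∧ (j : Ordinal.{u}) ≤ (k : Ordinal.{u}) :=
    fun i j => ⟨⟨max i.1 j.1, Set.mem_Iio.2 (max_lt i.2 j.2)⟩, le_max_left _ _, le_max_right _ _⟩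
  have memA : ∀ (j : Set.Iio δ) s a, a ∈ (n j).ct.A s → s ∈ (n j).ct.L := by
    intro j s a ha
    by_contra hs
    rw [(n j).ct.A_dom s hs] at ha; exact ha
  have memB : ∀ (j : Set.Iio δ) s b, b ∈ (n j).B s → s ∈ (n j).ct.L := by
    intro j s b hb
    by_contra hs
    rw [(n j).B_dom s hs] at hb; exact hb
  have memI : ∀ (j : Set.Iio δ) s X, X ∈ (n j).Idl s → s ∈ (n j).ct.L ∧ s ∉ (n j).W := by
    intro j s X hX
    by_contra hs
    rw [(n j).Idl_dom s (fun h => hs ⟨h.1, h.2⟩)] at hX; exact hX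
  have hWtrans : ∀ (i j : Set.Iio δ) s, s ∈ (n j).W → s ∈ (n i).ct.L → s ∈ (n i).W := by
    intro i j s hsW hsL
    obtain ⟨k, hik, hjk⟩ := hmx i j
    have h1 := (hmono j k hjk).2.1
    have h2 := (hmono i k hik).2.1
    rw [h2]
    exact ⟨(h1 ▸ hsW : s ∈ (n k).W ∩ (n j).ct.L).1, hsL⟩
  have hW_inter : ∀ i : Set.Iio δ, (n i).W = (⋃ j, (n j).W) ∩ (n i).ct.L := by
    intro i
    apply Set.Subset.antisymm
    · exact fun s hs => ⟨Set.mem_iUnion.2 ⟨i, hs⟩, (n i).W_sub hs⟩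
    · rintro s ⟨hsW, hsL⟩
      obtain ⟨j, hsj⟩ := Set.mem_iUnion.1 hsW
      exact hWtrans i j s hsj hsL
  have hlam_le : ∀ (i j : Set.Iio δ) s, s ∈ (n i).ct.L → (n j).lam s ≤ (n i).lam s := by
    intro i j s hs
    by_cases hsj : s ∈ (n j).ct.L
    · obtain ⟨k, hik, hjk⟩ := hmx i j
      rw [((hmono j k hjk).2.2 s hsj).1, ← ((hmono i k hik).2.2 s hs).1]
    · rw [(n j).lam_dom s hsj]; exact zero_le
  have hlam_eq : ∀ (i : Set.Iio δ) s, s ∈ (n i).ct.L →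
      (⨆ j, (n j).lam s) = (n i).lam s := by
    intro i s hs
    exact le_antisymm (ciSup_le' (fun j => hlam_le i j s hs))
      (le_ciSup ⟨(n i).lam s, by rintro x ⟨j, rfl⟩; exact hlam_le i j s hs⟩ i)
  have hB_eq : ∀ (i : Set.Iio δ) s, s ∈ (n i).ct.L → (⋃ j, (n j).B s) = (n i).B s := by
    intro i s hs
    apply Set.Subset.antisymm
    · intro b hb
      obtain ⟨j, hbj⟩ := Set.mem_iUnion.1 hb
      have hsj := memB j s b hbj
      obtain ⟨k, hik, hjk⟩ := hmx i j
      rw [((hmono i k hik).2.2 s hs).2.1, ← ((hmono j k hjk).2.2 s hsj).2.1]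
      exact hbj
    · exact Set.subset_iUnion (fun j => (n j).B s) i
  have hA_shift : ∀ (i j : Set.Iio δ) s a, a ∈ (n j).ct.A s →
      ∃ k : Set.Iio δ, (i : Ordinal.{u}) ≤ (k : Ordinal.{u}) ∧ a ∈ (n k).ct.A s := by
    intro i j s a ha
    obtain ⟨k, hik, hjk⟩ := hmx i j
    exact ⟨k, hik, ((hmono j k hjk).2.2 s (memA j s a ha)).2.2.1 ha⟩
  have hI_shift : ∀ (i j : Set.Iio δ) s X, X ∈ (n j).Idl s →
      ∃ k : Set.Iio δ, (i : Ordinal.{u}) ≤ (k : Ordinal.{u}) ∧ X ∈ (n k).Idl s := by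
    intro i j s X hX
    obtain ⟨k, hik, hjk⟩ := hmx i j
    exact ⟨k, hik, ((hmono j k hjk).2.2 s (memI j s X hX).1).2.2.2 hX⟩
  have hA_W : ∀ (i : Set.Iio δ) s, s ∈ (n i).W →
      (⋃ j, (n j).ct.A s) = (n i).ct.A s := by
    intro i s hs
    have hsL : s ∈ (n i).ct.L := (n i).W_sub hs
    apply Set.Subset.antisymm
    · intro a ha
      obtain ⟨j, haj⟩ := Set.mem_iUnion.1 ha
      have hsj := memA j s a haj
      have hsWj : s ∈ (n j).W := hWtrans j i s hs hsj
      obtain ⟨k, hik, hjk⟩ := hmx i j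
      rw [← (n i).B_eq_of_mem_W s hs, ((hmono i k hik).2.2 s hsL).2.1,
        ← ((hmono j k hjk).2.2 s hsj).2.1, (n j).B_eq_of_mem_W s hsWj]
      exact haj
    · exact Set.subset_iUnion (fun j => (n j).ct.A s) i
  have hlt_iff : ∀ (k : Set.Iio δ) s t, s ∈ (n k).ct.L → t ∈ (n k).ct.L →
      ((∃ j : Set.Iio δ, (n j).ct.lt s t) ↔ (n k).ct.lt s t) := by
    intro k s t hs ht
    constructor
    · rintro ⟨j, hj⟩
      obtain ⟨p, hkp, hjp⟩ := hmx k j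
      have hmem := (n j).ct.lt_mem hj
      have hp : (n p).ct.lt s t := ((hmono j p hjp).1.2.1 s t hmem.1 hmem.2).1 hj
      exact ((hmono k p hkp).1.2.1 s t hs ht).2 hp
    · exact fun h => ⟨k, h⟩
  set Idlu : τ → Set (Set (Set τ)) := fun s =>
    {X | s ∈ (⋃ i, (n i).ct.L) ∧ s ∉ (⋃ i, (n i).W) ∧
      ∃ (ι : Type u) (f : ι → Set (Set τ)), #ι < κ ∧
        (∀ k : ι, ∃ j : Set.Iio δ, f k ∈ (n j).Idl s) ∧ X = ⋃ k, f k} with hIdlu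
  have hI_single : ∀ (j : Set.Iio δ) s X, s ∉ (⋃ i, (n i).W) → X ∈ (n j).Idl s →
      X ∈ Idlu s := by
    intro j s X hsW hX
    refine ⟨Set.mem_iUnion.2 ⟨j, (memI j s X hX).1⟩, hsW, PUnit, fun _ => X, ?_,
      fun _ => ⟨j, hX⟩, (Set.iUnion_const X).symm⟩
    rw [Cardinal.mk_punit]; exact h1κ
  refine ⟨{
    ct := {
      L := ⋃ i, (n i).ct.L
      lt := fun s t => ∃ j : Set.Iio δ, (n j).ct.lt s t
      lt_mem := by
        rintro s t ⟨j, hj⟩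
        have h := (n j).ct.lt_mem hj
        exact ⟨Set.mem_iUnion.2 ⟨j, h.1⟩, Set.mem_iUnion.2 ⟨j, h.2⟩⟩
      lt_irrefl := by rintro s ⟨j, hj⟩; exact (n j).ct.lt_irrefl s hj
      lt_trans := by
        rintro r s t ⟨i, hi⟩ ⟨j, hj⟩
        obtain ⟨k, hik, hjk⟩ := hmx i j
        have h1 := (n i).ct.lt_mem hi
        have h2 := (n j).ct.lt_mem hj
        have hi' := ((hmono i k hik).1.2.1 r s h1.1 h1.2).1 hi
        have hj' := ((hmono j k hjk).1.2.1 s t h2.1 h2.2).1 hj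
        exact ⟨k, (n k).ct.lt_trans hi' hj'⟩
      lt_total := by
        intro s t hs ht
        obtain ⟨i, hsi⟩ := Set.mem_iUnion.1 hs
        obtain ⟨j, htj⟩ := Set.mem_iUnion.1 ht
        obtain ⟨k, hik, hjk⟩ := hmx i j
        have hsk := (hmono i k hik).1.1 hsi
        have htk := (hmono j k hjk).1.1 htj
        rcases (n k).ct.lt_total hsk htk with h | h | h
        · exact Or.inl ⟨k, h⟩
        · exact Or.inr (Or.inl h)
        · exact Or.inr (Or.inr ⟨k, h⟩)
      A := fun s => ⋃ j, (n j).ct.A s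
      A_dom := by
        intro t ht
        apply Set.iUnion_eq_empty.2
        exact fun j => (n j).ct.A_dom t (fun h => ht (Set.mem_iUnion.2 ⟨j, h⟩))
      A_sub := by
        intro t ht a ha s hsa
        obtain ⟨j, haj⟩ := Set.mem_iUnion.1 ha
        exact ⟨j, (n j).ct.A_sub (memA j t a haj) a haj s hsa⟩
      A_empty := by
        intro t ht
        obtain ⟨i, hti⟩ := Set.mem_iUnion.1 ht
        exact Set.mem_iUnion.2 ⟨i, (n i).ct.A_empty t hti⟩ }
    W := ⋃ i, (n i).W
    W_sub := by
      intro s hs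
      obtain ⟨i, hsi⟩ := Set.mem_iUnion.1 hs
      exact Set.mem_iUnion.2 ⟨i, (n i).W_sub hsi⟩
    lam := fun s => ⨆ j, (n j).lam s
    B := fun s => ⋃ j, (n j).B s
    Idl := Idlu
    lam_pow := by
      intro t ht
      obtain ⟨i, hti⟩ := Set.mem_iUnion.1 ht
      show (⨆ j, (n j).lam t) ^ κ = ⨆ j, (n j).lam t
      rw [hlam_eq i t hti]
      exact (n i).lam_pow t hti
    lam_dom := by
      intro t ht
      have h0 : ∀ j : Set.Iio δ, (n j).lam t = 0 := fun j =>
        (n j).lam_dom t (fun h => ht (Set.mem_iUnion.2 ⟨j, h⟩))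
      exact le_antisymm (ciSup_le' (fun j => (h0 j).le)) zero_le
    B_dom := by
      intro t ht
      apply Set.iUnion_eq_empty.2
      exact fun j => (n j).B_dom t (fun h => ht (Set.mem_iUnion.2 ⟨j, h⟩))
    Idl_dom := by
      intro t ht
      rw [hIdlu]
      ext X
      simp only [Set.mem_setOf_eq, Set.mem_empty_iff_false, iff_false, not_and]
      intro h1 h2
      exact absurd (⟨h1, h2⟩ : t ∈ (⋃ i, (n i).ct.L) \ (⋃ i, (n i).W)) ht
    B_eq_of_mem_W := by
      intro t ht
      obtain ⟨i, hti⟩ := Set.mem_iUnion.1 ht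
      show (⋃ j, (n j).B t) = ⋃ j, (n j).ct.A t
      rw [hB_eq i t ((n i).W_sub hti), (n i).B_eq_of_mem_W t hti, hA_W i t hti]
    A_card_of_mem_W := by
      intro t ht
      obtain ⟨i, hti⟩ := Set.mem_iUnion.1 ht
      show #(⋃ j, (n j).ct.A t) ≤ ⨆ j, (n j).lam t
      rw [hA_W i t hti, hlam_eq i t ((n i).W_sub hti)]
      exact (n i).A_card_of_mem_W t hti
    A_elt_of_mem_W := by
      intro t ht a ha
      obtain ⟨i, hti⟩ := Set.mem_iUnion.1 ht
      have ha' : a ∈ (n i).ct.A t := by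
        rw [← hA_W i t hti]; exact ha
      obtain ⟨h1, h2⟩ := (n i).A_elt_of_mem_W t hti a ha'
      constructor
      · show #a ≤ ⨆ j, (n j).lam t
        rw [hlam_eq i t ((n i).W_sub hti)]
        exact h1
      · exact h2.trans (Set.subset_iUnion (fun j => (n j).W) i)
    B_subA := by
      rintro t ⟨htL, htW⟩ b hb
      obtain ⟨i, hti⟩ := Set.mem_iUnion.1 htL
      have hb' : b ∈ (n i).B t := by rw [← hB_eq i t hti]; exact hb
      have htWi : t ∉ (n i).W := fun h => htW (Set.mem_iUnion.2 ⟨i, h⟩)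
      exact Set.mem_iUnion.2 ⟨i, (n i).B_subA t ⟨hti, htWi⟩ hb'⟩
    B_elt := by
      rintro t ⟨htL, htW⟩ b hb
      obtain ⟨i, hti⟩ := Set.mem_iUnion.1 htL
      have hb' : b ∈ (n i).B t := by rw [← hB_eq i t hti]; exact hb
      have htWi : t ∉ (n i).W := fun h => htW (Set.mem_iUnion.2 ⟨i, h⟩)
      obtain ⟨h1, h2⟩ := (n i).B_elt t ⟨hti, htWi⟩ b hb'
      refine ⟨h1.trans (Set.subset_iUnion (fun j => (n j).W) i), ?_⟩
      show #b ≤ ⨆ j, (n j).lam t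
      rw [hlam_eq i t hti]
      exact h2
    B_card := by
      rintro t ⟨htL, htW⟩
      obtain ⟨i, hti⟩ := Set.mem_iUnion.1 htL
      have htWi : t ∉ (n i).W := fun h => htW (Set.mem_iUnion.2 ⟨i, h⟩)
      show #(⋃ j, (n j).B t) ≤ 2 ^ (⨆ j, (n j).lam t)
      rw [hB_eq i t hti, hlam_eq i t hti]
      exact (n i).B_card t ⟨hti, htWi⟩
    Idl_sub := by
      rintro t ⟨htL, htW⟩ X hX
      obtain ⟨-, -, ι, f, hcard, hmem, rfl⟩ := hX
      apply Set.iUnion_subset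
      intro k
      obtain ⟨j, hkj⟩ := hmem k
      obtain ⟨htj, htWj⟩ := memI j t _ hkj
      exact ((n j).Idl_sub t ⟨htj, htWj⟩ _ hkj).trans
        (Set.subset_iUnion (fun j' => (n j').B t) j)
    Idl_down := by
      rintro t ⟨htL, htW⟩ X hX Y hYX
      obtain ⟨h1, h2, ι, f, hcard, hmem, rfl⟩ := hX
      refine ⟨h1, h2, ι, fun k => f k ∩ Y, hcard, ?_, ?_⟩
      · intro k
        obtain ⟨j, hkj⟩ := hmem k
        obtain ⟨htj, htWj⟩ := memI j t _ hkj
        exact ⟨j, (n j).Idl_down t ⟨htj, htWj⟩ _ hkj _ Set.inter_subset_left⟩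
      · rw [← Set.iUnion_inter, Set.inter_eq_self_of_subset_right hYX]
    Idl_iUnion := by
      rintro t ⟨htL, htW⟩ ι f hcard hf
      simp only [hIdlu, Set.mem_setOf_eq] at hf ⊢
      choose h1 h2 ι' g hcard' hmem' hX using hf
      refine ⟨htL, htW, (Σ i, ι' i), fun p => g p.1 p.2, ?_,
        fun p => hmem' p.1 p.2, ?_⟩
      · rw [Cardinal.mk_sigma]
        exact Cardinal.sum_lt_of_isRegular hreg hcard (fun i => hcard' i)
      · calc (⋃ i, f i) = ⋃ i, ⋃ k, g i k := Set.iUnion_congr hX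
          _ = ⋃ p : Σ i, ι' i, g p.1 p.2 := Set.iUnion_sigma' g
    Idl_spec := by
      rintro t ⟨htL, htW⟩ a ha
      obtain ⟨j, haj⟩ := Set.mem_iUnion.1 ha
      have htj := memA j t a haj
      have htWj : t ∉ (n j).W := fun h => htW (Set.mem_iUnion.2 ⟨j, h⟩)
      have h := (n j).Idl_spec t ⟨htj, htWj⟩ a haj
      have heq : {b ∈ (⋃ j', (n j').B t) | (a ∩ b).Nonempty}
          = {b ∈ (n j).B t | (a ∩ b).Nonempty} := by
        rw [hB_eq j t htj]
      rw [heq]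
      exact hI_single j t _ htW h },
    rfl, fun s t => Iff.rfl, ?_, rfl, ?_, ?_, ?_, ?_⟩
  · -- A characterization
    intro i s hs
    ext a
    show a ∈ (⋃ j, (n j).ct.A s) ↔ _
    simp only [Set.mem_iUnion, Set.mem_setOf_eq]
    constructor
    · rintro ⟨j, haj⟩
      exact hA_shift i j s a haj
    · rintro ⟨j, -, haj⟩
      exact ⟨j, haj⟩
  · -- lam and B
    intro i s hs
    exact ⟨hlam_eq i s hs, hB_eq i s hs⟩
  · -- Idl characterization
    intro i s hs hsW
    have hsL : s ∈ ⋃ j, (n j).ct.L := Set.mem_iUnion.2 ⟨i, hs⟩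
    show Idlu s = _
    rw [hIdlu]
    ext X
    simp only [Set.mem_setOf_eq]
    constructor
    · rintro ⟨-, -, ι, f, hcard, hmem, rfl⟩
      refine ⟨ι, f, hcard, fun k => ?_, rfl⟩
      obtain ⟨j, hkj⟩ := hmem k
      exact hI_shift i j s _ hkj
    · rintro ⟨ι, f, hcard, hmem, rfl⟩
      exact ⟨hsL, hsW, ι, f, hcard, fun k => ((hmem k).imp (fun j h => h.2)), rfl⟩
  · -- upper bound
    intro i
    refine ⟨⟨fun s hs => Set.mem_iUnion.2 ⟨i, hs⟩,
      fun s t hs ht => (hlt_iff i s t hs ht).symm,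
      fun t ht => Set.subset_iUnion (fun j => (n j).ct.A t) i⟩, hW_inter i, ?_⟩
    intro s hs
    refine ⟨(hlam_eq i s hs).symm, (hB_eq i s hs).symm,
      Set.subset_iUnion (fun j => (n j).ct.A s) i, ?_⟩
    intro X hX
    obtain ⟨-, hsWi⟩ := memI i s X hX
    refine hI_single i s X (fun h => hsWi ?_) hX
    rw [hW_inter i]
    exact ⟨h, hs⟩
  · -- least upper bound
    intro n' hn'
    refine ⟨⟨?_, ?_, ?_⟩, ?_, ?_⟩
    · intro s hs
      obtain ⟨i, hsi⟩ := Set.mem_iUnion.1 hs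
      exact (hn' i).1.1 hsi
    · intro s t hs ht
      obtain ⟨i, hsi⟩ := Set.mem_iUnion.1 hs
      obtain ⟨j, htj⟩ := Set.mem_iUnion.1 ht
      obtain ⟨k, hik, hjk⟩ := hmx i j
      have hsk := (hmono i k hik).1.1 hsi
      have htk := (hmono j k hjk).1.1 htj
      exact Iff.trans (hlt_iff k s t hsk htk) ((hn' k).1.2.1 s t hsk htk)
    · intro t ht a ha
      obtain ⟨j, haj⟩ := Set.mem_iUnion.1 ha
      exact (hn' j).1.2.2 t (memA j t a haj) haj
    · apply Set.Subset.antisymm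
      · intro s hs
        obtain ⟨i, hsi⟩ := Set.mem_iUnion.1 hs
        have h := (hn' i).2.1
        have h2 : s ∈ n'.W ∩ (n i).ct.L := h ▸ hsi
        exact ⟨h2.1, Set.mem_iUnion.2 ⟨i, (n i).W_sub hsi⟩⟩
      · rintro s ⟨hsW, hsL⟩
        obtain ⟨i, hsi⟩ := Set.mem_iUnion.1 hsL
        have h2 : s ∈ (n i).W := by rw [(hn' i).2.1]; exact ⟨hsW, hsi⟩
        exact Set.mem_iUnion.2 ⟨i, h2⟩
    · intro s hs
      obtain ⟨i, hsi⟩ := Set.mem_iUnion.1 hs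
      obtain ⟨hlam', hB', hA', hI'⟩ := (hn' i).2.2 s hsi
      refine ⟨(hlam_eq i s hsi).trans hlam', (hB_eq i s hsi).trans hB', ?_, ?_⟩
      · intro a ha
        obtain ⟨j, haj⟩ := Set.mem_iUnion.1 ha
        exact ((hn' j).2.2 s (memA j s a haj)).2.2.1 haj
      · intro X hX
        obtain ⟨hsL, hsW, ι, f, hcard, hmem, rfl⟩ := hX
        have hsL' : s ∈ n'.ct.L := (hn' i).1.1 hsi
        have hsW' : s ∉ n'.W := fun h =>
          hsW (Set.mem_iUnion.2 ⟨i, by rw [(hn' i).2.1]; exact ⟨h, hsi⟩⟩)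
        have hf' : ∀ k, f k ∈ n'.Idl s := by
          intro k
          obtain ⟨j, hkj⟩ := hmem k
          exact ((hn' j).2.2 s (memI j s _ hkj).1).2.2.2 hkj
        exact n'.Idl_iUnion s ⟨hsL', hsW'⟩ ι f hcard hf'
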